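/- Conversely, every copyable (information) variable on a symplectic vector space is a Poisson variable: if a linear variable Z : V → Z' admits a symplectic copying transformation as above, then Z Ω Z^T = 0. -/

import Mathlib

open Matrix

/-- The standard symplectic form matrix `[[0, 1], [-1, 0]]` on `(ι ⊕ ι) → K`. -/
def stdJ (K : Type*) [Field K] (ι : Type*) [Fintype ι] [DecidableEq ι] :
    Matrix (ι ⊕ ι) (ι ⊕ ι) K :=
  Matrix.fromBlocks 0 1 (-1) 0

/-- The dot-product bilinear form on `m → K`. -/
private lemma aux_mem_of_dot {K : Type*} [Field K] {m : Type*} [Fintype m] [DecidableEq m]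
    (U : Submodule K (m → K)) (r : m → K)
    (h : ∀ d : m → K, (∀ u ∈ U, u ⬝ᵥ d = 0) → r ⬝ᵥ d = 0) : r ∈ U := by
  set B : LinearMap.BilinForm K (m → K) := Matrix.toBilin' (1 : Matrix m m K) with hB
  have hBapp : ∀ x y : m → K, B x y = x ⬝ᵥ y := by
    intro x y
    rw [hB, Matrix.toBilin'_apply', Matrix.one_mulVec]
  have hrefl : B.IsRefl := by
    intro x y hxy
    rw [hBapp] at hxy ⊢
    rwa [dotProduct_comm]
  have hnd : B.Nondegenerate := by
    refine (LinearMap.IsRefl.nondegenerate_iff_separatingLeft hrefl).mpr ?_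
    intro x hx
    funext i
    have := hx (Pi.single i 1)
    rw [hBapp] at this
    simpa [dotProduct_single] using this
  have key := LinearMap.BilinForm.orthogonal_orthogonal hnd hrefl U
  rw [← key]
  intro d hd
  have hd' : ∀ u ∈ U, u ⬝ᵥ d = 0 := by
    intro u hu
    have := hd u hu
    rwa [hBapp] at this
  have := h d hd'
  rw [hBapp, dotProduct_comm]
  exact this

private lemma aux_eq_of_mulVec {K : Type*} [Field K] {κ m : Type*} [Fintype m] [DecidableEq m]
    {M N : Matrix κ m K} (h : ∀ v, M.mulVec v = N.mulVec v) : M = N := by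
  ext i j
  have := congrFun (h (Pi.single j 1)) i
  simpa [Matrix.mulVec_single] using this

/-- Every copyable (information) variable is a Poisson variable: if a linear
variable `Z` admits an affine symplectic copying transformation (relative to the
support of an epistemic state `(U, a)`), then `Z Ω Zᵀ = 0`. -/
theorem copyable_variable_is_poisson {K : Type*} [Field K] {n : ℕ}
    {κ : Type*} [Fintype κ] [DecidableEq κ]
    (Z : Matrix κ (Fin n ⊕ Fin n) K)
    (G : Matrix ((Fin n ⊕ Fin n) ⊕ (Fin n ⊕ Fin n))
        ((Fin n ⊕ Fin n) ⊕ (Fin n ⊕ Fin n)) K)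
    (w : ((Fin n ⊕ Fin n) ⊕ (Fin n ⊕ Fin n)) → K)
    (hG : Gᵀ * Matrix.fromBlocks (stdJ K (Fin n)) 0 0 (stdJ K (Fin n)) * G =
        Matrix.fromBlocks (stdJ K (Fin n)) 0 0 (stdJ K (Fin n)))
    (U : Submodule K ((Fin n ⊕ Fin n) → K)) (a : (Fin n ⊕ Fin n) → K)
    (hU : ∀ x ∈ U, ∀ y ∈ U, x ⬝ᵥ (stdJ K (Fin n)).mulVec y = 0)
    (hcopy : ∀ (v x : (Fin n ⊕ Fin n) → K), (∀ u ∈ U, u ⬝ᵥ x = u ⬝ᵥ a) →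
        Z.mulVec ((G.mulVec (Sum.elim v x) + w) ∘ Sum.inl) = Z.mulVec v ∧
        Z.mulVec ((G.mulVec (Sum.elim v x) + w) ∘ Sum.inr) = Z.mulVec v) :
    Z * stdJ K (Fin n) * Zᵀ = 0 := by
  set J := stdJ K (Fin n) with hJdef
  set J₂ : Matrix ((Fin n ⊕ Fin n) ⊕ (Fin n ⊕ Fin n))
      ((Fin n ⊕ Fin n) ⊕ (Fin n ⊕ Fin n)) K := Matrix.fromBlocks J 0 0 J with hJ₂def
  -- J₂ * J₂ = -1
  have hJJ : J * J = -1 := by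
    rw [hJdef, stdJ, Matrix.fromBlocks_multiply]
    simp [← Matrix.fromBlocks_one, Matrix.fromBlocks_neg]
  have hJ₂J₂ : J₂ * J₂ = -1 := by
    rw [hJ₂def, Matrix.fromBlocks_multiply]
    simp [hJJ, ← Matrix.fromBlocks_one, Matrix.fromBlocks_neg]
  -- G is also symplectic on the other side: G * J₂ * Gᵀ = J₂
  have e1 : (-J₂ * Gᵀ * J₂) * G = 1 := by
    calc (-J₂ * Gᵀ * J₂) * G = -(J₂ * (Gᵀ * J₂ * G)) := by
          simp only [neg_mul, mul_assoc]
      _ = -(J₂ * J₂) := by rw [hG]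
      _ = 1 := by rw [hJ₂J₂, neg_neg]
  have e2 : G * (-J₂ * Gᵀ * J₂) = 1 := mul_eq_one_comm.mpr e1
  have hG' : G * J₂ * Gᵀ = J₂ := by
    have hJn : J₂ * -J₂ = 1 := by rw [mul_neg, hJ₂J₂, neg_neg]
    have e3 : G * -J₂ * Gᵀ * (J₂ * -J₂) = (G * (-J₂ * Gᵀ * J₂)) * -J₂ := by
      simp only [mul_assoc]
    rw [hJn, mul_one, e2, one_mul] at e3
    rw [mul_neg, neg_mul] at e3
    exact neg_injective e3
  -- block decomposition of G
  set A := G.toBlocks₁₁ with hA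
  set B := G.toBlocks₁₂ with hB
  set C := G.toBlocks₂₁ with hC
  set D := G.toBlocks₂₂ with hD
  have hGblocks : G = Matrix.fromBlocks A B C D := (Matrix.fromBlocks_toBlocks G).symm
  -- extract the off-diagonal block identity A*J*Cᵀ + B*J*Dᵀ = 0
  have hblock : A * J * Cᵀ + B * J * Dᵀ = 0 := by
    have := congrArg Matrix.toBlocks₁₂ hG'
    rw [hGblocks] at this
    rw [Matrix.fromBlocks_transpose, Matrix.fromBlocks_multiply,
      Matrix.fromBlocks_multiply] at this
    simpa [hJ₂def, Matrix.toBlocks_fromBlocks₁₂] using this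
  -- rewrite the copy hypothesis in block form
  have hcopy' : ∀ (v x : (Fin n ⊕ Fin n) → K), (∀ u ∈ U, u ⬝ᵥ x = u ⬝ᵥ a) →
      Z.mulVec (A.mulVec v + B.mulVec x + w ∘ Sum.inl) = Z.mulVec v ∧
      Z.mulVec (C.mulVec v + D.mulVec x + w ∘ Sum.inr) = Z.mulVec v := by
    intro v x hx
    obtain ⟨h1, h2⟩ := hcopy v x hx
    rw [hGblocks, Matrix.fromBlocks_mulVec] at h1 h2
    simp only [Sum.elim_comp_inl, Sum.elim_comp_inr] at h1 h2
    constructor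
    · rw [← h1]
      congr 1
    · rw [← h2]
      congr 1
  have ha : ∀ u ∈ U, u ⬝ᵥ a = u ⬝ᵥ a := fun _ _ => rfl
  -- base values at v = 0, x = a
  have hbase1 : Z.mulVec (B.mulVec a + w ∘ Sum.inl) = 0 := by
    simpa using (hcopy' 0 a ha).1
  have hbase2 : Z.mulVec (D.mulVec a + w ∘ Sum.inr) = 0 := by
    simpa using (hcopy' 0 a ha).2
  -- Z * A = Z and Z * C = Z
  have hZA : Z * A = Z := by
    apply aux_eq_of_mulVec
    intro v
    have h := (hcopy' v a ha).1
    rw [add_assoc, Matrix.mulVec_add, hbase1, add_zero, Matrix.mulVec_mulVec] at h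
    exact h
  have hZC : Z * C = Z := by
    apply aux_eq_of_mulVec
    intro v
    have h := (hcopy' v a ha).2
    rw [add_assoc, Matrix.mulVec_add, hbase2, add_zero, Matrix.mulVec_mulVec] at h
    exact h
  -- Z*B and Z*D annihilate the dot-orthocomplement of U
  have hZB : ∀ d : (Fin n ⊕ Fin n) → K, (∀ u ∈ U, u ⬝ᵥ d = 0) → (Z * B).mulVec d = 0 := by
    intro d hd
    have hx : ∀ u ∈ U, u ⬝ᵥ (a + d) = u ⬝ᵥ a := by
      intro u hu
      rw [dotProduct_add, hd u hu, add_zero]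
    have h1 : Z.mulVec (B.mulVec (a + d) + w ∘ Sum.inl) = 0 := by
      simpa using (hcopy' 0 (a + d) hx).1
    have harg : B.mulVec (a + d) + w ∘ Sum.inl = (B.mulVec a + w ∘ Sum.inl) + B.mulVec d := by
      rw [Matrix.mulVec_add]; abel
    rw [harg, Matrix.mulVec_add, hbase1, zero_add] at h1
    rw [Matrix.mulVec_mulVec] at h1; exact h1
  have hZD : ∀ d : (Fin n ⊕ Fin n) → K, (∀ u ∈ U, u ⬝ᵥ d = 0) → (Z * D).mulVec d = 0 := by
    intro d hd
    have hx : ∀ u ∈ U, u ⬝ᵥ (a + d) = u ⬝ᵥ a := by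
      intro u hu
      rw [dotProduct_add, hd u hu, add_zero]
    have h1 : Z.mulVec (D.mulVec (a + d) + w ∘ Sum.inr) = 0 := by
      simpa using (hcopy' 0 (a + d) hx).2
    have harg : D.mulVec (a + d) + w ∘ Sum.inr = (D.mulVec a + w ∘ Sum.inr) + D.mulVec d := by
      rw [Matrix.mulVec_add]; abel
    rw [harg, Matrix.mulVec_add, hbase2, zero_add] at h1
    rw [Matrix.mulVec_mulVec] at h1; exact h1
  -- the rows of Z*B and Z*D lie in U
  have hrowB : ∀ i, (Z * B) i ∈ U := by
    intro i
    apply aux_mem_of_dot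
    intro d hd
    exact congrFun (hZB d hd) i
  have hrowD : ∀ i, (Z * D) i ∈ U := by
    intro i
    apply aux_mem_of_dot
    intro d hd
    exact congrFun (hZD d hd) i
  -- hence (Z*B) * J * (Z*D)ᵀ = 0
  have hBD : (Z * B) * J * (Z * D)ᵀ = 0 := by
    ext i j
    have : ((Z * B) * J * (Z * D)ᵀ) i j = (Z * B) i ⬝ᵥ J.mulVec ((Z * D) j) := by
      rw [Matrix.mul_apply', Matrix.mul_apply_eq_vecMul, ← Matrix.dotProduct_mulVec]
      congr 1
    rw [this, hU _ (hrowB i) _ (hrowD j)]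
    simp
  -- conclude
  calc Z * J * Zᵀ = (Z * A) * J * (Z * C)ᵀ := by rw [hZA, hZC]
    _ = Z * (A * J * Cᵀ) * Zᵀ := by
        rw [Matrix.transpose_mul]
        simp only [Matrix.mul_assoc]
    _ = Z * (-(B * J * Dᵀ)) * Zᵀ := by
        rw [eq_neg_of_add_eq_zero_left hblock]
    _ = -((Z * B) * J * (Z * D)ᵀ) := by
        rw [Matrix.transpose_mul]
        simp only [Matrix.mul_neg, Matrix.neg_mul, Matrix.mul_assoc]
    _ = 0 := by rw [hBD, neg_zero]
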